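/- Given an (n,m)-system with decomposition data, suppose j ≤ t_i and Y ⊆ N_i with |Y| ≤ j. Then there exists a private pair p ⊆ N_i \ Y for N_i at time j such that either p is a subset of some 3-cross of N_i at time j with respect to Y, or p contains a vertex that is private for N_i at time j. -/

import Mathlib

open Finset

/-- An `(n,m)`-system: a collection `N 1, …, N ℓ` of distinct `k`-element subsets of a
finite vertex set `V` of cardinality `n`, covering `V`, with `ℓ ≥ 2`, `k ≥ 3`,
satisfying the minimal-empty-intersection property (i) and the clique property (ii). -/
structure NMSystem (α : Type*) [DecidableEq α] where
  ell : ℕ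
  k : ℕ
  V : Finset α
  N : Fin ell → Finset α
  h_ell : 2 ≤ ell
  h_k : 3 ≤ k
  h_inj : Function.Injective N
  h_card : ∀ i, (N i).card = k
  h_sub : ∀ i, N i ⊆ V
  h_cover : ∀ v ∈ V, ∃ i, v ∈ N i
  h_empty_inter : ∀ v : α, ¬ (∀ i, v ∈ N i)
  h_min : ∀ i, ∃ v, ∀ j, j ≠ i → v ∈ N j
  h_clique : ∀ S ⊆ V, k + 1 ≤ S.card → ∃ T ⊆ S, T.card = 3 ∧ ∀ i, ¬ T ⊆ N i

namespace NMSystem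

variable {α : Type*} [DecidableEq α]

/-- the number of vertices `n` -/
def n (S : NMSystem α) : ℕ := S.V.card

/-- the parameter `m = n - k` -/
def m (S : NMSystem α) : ℕ := S.n - S.k

end NMSystem

/-- Decomposition data for an `(n,m)`-system: stage numbers `t i` (weakly decreasing in `i`)
with at least `4` surviving sets at each stage `j ≤ t = t 0`, together with pairwise
distinct kernel vertices `a i s` (for `s ≤ t i`) satisfying `a i s ∉ N i` and
`a i s ∈ N r` for every `r ≠ i` with `s ≤ t r`. -/
structure Decomp {α : Type*} [DecidableEq α] (S : NMSystem α) where
  t : Fin S.ell → ℕ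
  a : Fin S.ell → ℕ → α
  h_mono : ∀ i j : Fin S.ell, i ≤ j → t j ≤ t i
  h_stages : ∀ j : ℕ, j ≤ t ⟨0, Nat.lt_of_lt_of_le Nat.zero_lt_two S.h_ell⟩ →
      4 ≤ (Finset.univ.filter (fun i => j ≤ t i)).card
  h_a_mem : ∀ i s, s ≤ t i → a i s ∈ S.V
  h_a_not : ∀ i s, s ≤ t i → a i s ∉ S.N i
  h_a_in : ∀ i s, s ≤ t i → ∀ r, r ≠ i → s ≤ t r → a i s ∈ S.N r
  h_a_inj : ∀ i s i' s', s ≤ t i → s' ≤ t i' → (i ≠ i' ∨ s ≠ s') → a i s ≠ a i' s'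

namespace Decomp

variable {α : Type*} [DecidableEq α] {S : NMSystem α} (D : Decomp S)

/-- the total number of stages `t = t_1` -/
def T : ℕ := D.t ⟨0, Nat.lt_of_lt_of_le Nat.zero_lt_two S.h_ell⟩

/-- the set `A` of all kernel vertices -/
def A : Finset α :=
  Finset.univ.biUnion (fun i => (Finset.range (D.t i + 1)).image (D.a i))

/-- the set `G = V \ A` of garbage vertices -/
def G : Finset α := S.V \ D.A

/-- the critical time `t_g` of a vertex `g` -/
def tg (g : α) : ℕ := (Finset.univ.filter (fun i => g ∈ S.N i)).sup D.t

/-- the critical index set `I_g` of a vertex `g` -/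
def Ig (g : α) : Finset (Fin S.ell) :=
  Finset.univ.filter (fun i => g ∈ S.N i ∧ D.t i = D.tg g)

/-- the set `Γ_x` of critical garbage vertices of `N x` -/
def Gamma (x : Fin S.ell) : Finset α := D.G.filter (fun g => D.Ig g = {x})

/-- `v` is a private vertex for `N i` at time `j` -/
def IsPrivateVertex (i : Fin S.ell) (j : ℕ) (v : α) : Prop :=
  v ∈ S.N i ∧ ∀ r, r ≠ i → j ≤ D.t r → v ∉ S.N r

/-- `p` is a private pair for `N i` at time `j` -/
def IsPrivatePair (i : Fin S.ell) (j : ℕ) (p : Finset α) : Prop :=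
  p ⊆ S.N i ∧ p.card = 2 ∧ ∀ r, r ≠ i → j ≤ D.t r → ¬ p ⊆ S.N r

/-- `C` is a `3`-cross of `N i` at time `j` with respect to `Y` -/
def IsThreeCross (i : Fin S.ell) (j : ℕ) (Y C : Finset α) : Prop :=
  C.card = 3 ∧ C ⊆ (S.N i ∪ (Finset.range (j + 1)).image (D.a i)) \ Y ∧
    ∀ r, ¬ C ⊆ S.N r

end Decomp

/-- for `j ≤ t i` and `Y ⊆ N i` with `|Y| ≤ j` there is a private pair
`p ⊆ N i \ Y` for `N i` at time `j` such that either `p` is contained in some `3`-cross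
of `N i` at time `j` with respect to `Y`, or `p` contains a vertex private for `N i`
at time `j`. -/
theorem private_pair_exists {α : Type*} [DecidableEq α]
    (S : NMSystem α) (D : Decomp S) (i : Fin S.ell) (j : ℕ) (hj : j ≤ D.t i)
    (Y : Finset α) (hY : Y ⊆ S.N i) (hYcard : Y.card ≤ j) :
    ∃ p : Finset α, p ⊆ S.N i \ Y ∧ D.IsPrivatePair i j p ∧
      ((∃ C : Finset α, D.IsThreeCross i j Y C ∧ p ⊆ C) ∨
        (∃ v ∈ p, D.IsPrivateVertex i j v)) := by

  classical
  set i0 : Fin S.ell := ⟨0, Nat.lt_of_lt_of_le Nat.zero_lt_two S.h_ell⟩ with hi0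
  have hjt0 : j ≤ D.t i0 := le_trans hj (D.h_mono i0 i (by rw [Fin.le_def]; exact Nat.zero_le _))
  have hstage := D.h_stages j hjt0
  set R : Finset (Fin S.ell) := Finset.univ.filter (fun r => j ≤ D.t r) with hRdef
  have hR3 : 2 ≤ (R \ {i}).card := by
    have h1 : R.card - ({i} : Finset (Fin S.ell)).card ≤ (R \ {i}).card :=
      Finset.le_card_sdiff _ _
    simp only [Finset.card_singleton] at h1
    omega
  obtain ⟨r1, hr1m, r2, hr2m, hr12⟩ := Finset.one_lt_card.mp (by omega : 1 < (R \ {i}).card)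
  have hr1 : j ≤ D.t r1 ∧ r1 ≠ i := by
    have := Finset.mem_sdiff.mp hr1m
    exact ⟨(Finset.mem_filter.mp this.1).2, by simpa using this.2⟩
  have hr2 : j ≤ D.t r2 ∧ r2 ≠ i := by
    have := Finset.mem_sdiff.mp hr2m
    exact ⟨(Finset.mem_filter.mp this.1).2, by simpa using this.2⟩
  -- the kernel vertices of N i up to time j
  set B : Finset α := (Finset.range (j + 1)).image (D.a i) with hBdef
  have hmemB : ∀ x ∈ B, ∃ s ≤ j, x = D.a i s := by
    intro x hx
    obtain ⟨s, hs, rfl⟩ := Finset.mem_image.mp hx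
    exact ⟨s, Nat.lt_succ_iff.mp (Finset.mem_range.mp hs), rfl⟩
  have hBcard : B.card = j + 1 := by
    rw [hBdef, Finset.card_image_of_injOn, Finset.card_range]
    intro s hs s' hs' hss
    by_contra hne
    exact D.h_a_inj i s i s'
      (le_trans (Nat.lt_succ_iff.mp (Finset.mem_range.mp hs)) hj)
      (le_trans (Nat.lt_succ_iff.mp (Finset.mem_range.mp hs')) hj) (Or.inr hne) hss
  have hBnotNi : ∀ x ∈ B, x ∉ S.N i := by
    intro x hx
    obtain ⟨s, hs, rfl⟩ := hmemB x hx
    exact D.h_a_not i s (le_trans hs hj)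
  have hBin : ∀ x ∈ B, ∀ r, r ≠ i → j ≤ D.t r → x ∈ S.N r := by
    intro x hx r hrne hjr
    obtain ⟨s, hs, rfl⟩ := hmemB x hx
    exact D.h_a_in i s (le_trans hs hj) r hrne (le_trans hs hjr)
  -- the bound 2 * (j + 1) ≤ k
  set B2 : Finset α := (Finset.range (j + 1)).image (D.a r2) with hB2def
  have hB2card : B2.card = j + 1 := by
    rw [hB2def, Finset.card_image_of_injOn, Finset.card_range]
    intro s hs s' hs' hss
    by_contra hne
    exact D.h_a_inj r2 s r2 s'
      (le_trans (Nat.lt_succ_iff.mp (Finset.mem_range.mp hs)) hr2.1)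
      (le_trans (Nat.lt_succ_iff.mp (Finset.mem_range.mp hs')) hr2.1) (Or.inr hne) hss
  have hdisj : Disjoint B B2 := by
    rw [Finset.disjoint_left]
    intro x hx hx2
    obtain ⟨s, hs, rfl⟩ := hmemB x hx
    obtain ⟨s', hs', hx2'⟩ := Finset.mem_image.mp hx2
    exact D.h_a_inj i s r2 s' (le_trans hs hj)
      (le_trans (Nat.lt_succ_iff.mp (Finset.mem_range.mp hs')) hr2.1)
      (Or.inl (Ne.symm hr2.2)) hx2'.symm
  have hsubU : B ∪ B2 ⊆ S.N r1 := by
    intro x hx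
    rcases Finset.mem_union.mp hx with h | h
    · exact hBin x h r1 hr1.2 hr1.1
    · obtain ⟨s, hs, rfl⟩ := Finset.mem_image.mp h
      have hsj : s ≤ j := Nat.lt_succ_iff.mp (Finset.mem_range.mp hs)
      exact D.h_a_in r2 s (le_trans hsj hr2.1) r1 hr12 (le_trans hsj hr1.1)
  have hk2 : 2 * (j + 1) ≤ S.k := by
    have := Finset.card_le_card hsubU
    rw [Finset.card_union_of_disjoint hdisj, hBcard, hB2card, S.h_card] at this
    omega
  -- the big set S'
  set S' : Finset α := (S.N i \ Y) ∪ B with hS'def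
  have hS'V : S' ⊆ S.V := by
    intro x hx
    rcases Finset.mem_union.mp hx with h | h
    · exact S.h_sub i (Finset.mem_sdiff.mp h).1
    · obtain ⟨s, hs, rfl⟩ := hmemB x h
      exact D.h_a_mem i s (le_trans hs hj)
  have hS'card : S.k + 1 ≤ S'.card := by
    have hdis : Disjoint (S.N i \ Y) B := by
      rw [Finset.disjoint_left]
      intro x hx hxB
      exact hBnotNi x hxB (Finset.mem_sdiff.mp hx).1
    rw [hS'def, Finset.card_union_of_disjoint hdis, Finset.card_sdiff_of_subset hY, S.h_card, hBcard]
    omega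
  obtain ⟨T, hTsub, hTcard, hTnot⟩ := S.h_clique S' hS'V hS'card
  have hTY : ∀ x ∈ T, x ∉ Y := by
    intro x hx hxY
    rcases Finset.mem_union.mp (hTsub hx) with h | h
    · exact (Finset.mem_sdiff.mp h).2 hxY
    · exact hBnotNi x h (hY hxY)
  set P : Finset α := T ∩ S.N i with hPdef
  have hPsub : P ⊆ S.N i \ Y := by
    intro x hx
    have := Finset.mem_inter.mp hx
    exact Finset.mem_sdiff.mpr ⟨this.2, hTY x this.1⟩
  have hkernel : ∀ x ∈ T, x ∉ S.N i → ∀ r, r ≠ i → j ≤ D.t r → x ∈ S.N r := by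
    intro x hx hxN r hrne hjr
    rcases Finset.mem_union.mp (hTsub hx) with h | h
    · exact absurd (Finset.mem_sdiff.mp h).1 hxN
    · exact hBin x h r hrne hjr
  have hcontr : ∀ r, r ≠ i → j ≤ D.t r → ¬ P ⊆ S.N r := by
    intro r hrne hjr hPr
    apply hTnot r
    intro x hx
    by_cases hxN : x ∈ S.N i
    · exact hPr (Finset.mem_inter.mpr ⟨hx, hxN⟩)
    · exact hkernel x hx hxN r hrne hjr
  have hP1 : 1 ≤ P.card := by
    by_contra h
    have hPe : P = ∅ := Finset.card_eq_zero.mp (by omega)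
    exact hcontr r1 hr1.2 hr1.1 (by simp [hPe])
  have hP2 : P.card ≤ 2 := by
    by_contra h
    have hPT : P = T := Finset.eq_of_subset_of_card_le Finset.inter_subset_left (by omega)
    exact hTnot i (by rw [← hPT]; exact Finset.inter_subset_right)
  interval_cases hPc : P.card
  · -- P.card = 1 : private vertex case
    obtain ⟨v, hveq⟩ := Finset.card_eq_one.mp hPc
    have hvP : v ∈ P := by rw [hveq]; exact Finset.mem_singleton_self v
    have hvNi : v ∈ S.N i := (Finset.mem_inter.mp hvP).2
    have hvpriv : D.IsPrivateVertex i j v := by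
      refine ⟨hvNi, fun r hrne hjr hvr => hcontr r hrne hjr ?_⟩
      rw [hveq]
      exact Finset.singleton_subset_iff.mpr hvr
    have hcard2 : 2 ≤ (S.N i \ Y).card := by
      rw [Finset.card_sdiff_of_subset hY, S.h_card]
      omega
    obtain ⟨w, hw, hwv⟩ := Finset.exists_mem_ne (show 1 < (S.N i \ Y).card by omega) v
    refine ⟨{v, w}, ?_, ⟨?_, ?_, ?_⟩, Or.inr ⟨v, by simp, hvpriv⟩⟩
    · exact Finset.insert_subset (hPsub hvP) (Finset.singleton_subset_iff.mpr hw)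
    · intro x hx
      rcases Finset.mem_insert.mp hx with rfl | hx
      · exact hvNi
      · rw [Finset.mem_singleton.mp hx]
        exact (Finset.mem_sdiff.mp hw).1
    · exact Finset.card_pair (Ne.symm hwv)
    · intro r hrne hjr hpr
      exact hvpriv.2 r hrne hjr (hpr (Finset.mem_insert_self v _))
  · -- P.card = 2 : the pair is inside the 3-cross T
    refine ⟨P, hPsub, ⟨Finset.inter_subset_right, hPc, hcontr⟩,
      Or.inl ⟨T, ⟨hTcard, ?_, fun r => hTnot r⟩, Finset.inter_subset_left⟩⟩
    intro x hx
    refine Finset.mem_sdiff.mpr ⟨?_, hTY x hx⟩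
    rcases Finset.mem_union.mp (hTsub hx) with h | h
    · exact Finset.mem_union_left _ (Finset.mem_sdiff.mp h).1
    · exact Finset.mem_union_right _ h
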